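/- Let f ∈ L(X°), g ∈ L(∂X), and α, β : ∂X → ℂ. Put A = {x ∈ ∂X : β(x) ≠ 0} and B = {x ∈ ∂X : β(x) = 0}. Assume α(x) ≠ 0 for all x ∈ B, |α(x)+β(x)| ≥ |β(x)| for all x ∈ A, and additionally that either B is nonempty or |α(x)+β(x)| > |β(x)| for at least one x ∈ A. Define the matrix P̃ over X°∪A by P̃(x,y) = P(x,y) for x ∈ X° and P̃(x,y) = (β(x)/(α(x)+β(x)))·P(x,y) for x ∈ A, and similarly the (X°∪A)×B block P̃_{X°∪A,B}(x,z) = P(x,z) for x ∈ X°, = (β(x)/(α(x)+β(x)))·P(x,z) for x ∈ A; define f̃ ∈ L(X°∪A) by f̃ = f on X° and f̃(x) = −g(x)/(α(x)+β(x)) for x ∈ A. Then the (X°∪A)×(X°∪A) matrix I − P̃ is invertible, and there is a unique u ∈ L(X) satisfying Δu = f on X° and α(x)u(x) + β(x)∂_n u(x) = g(x) for all x ∈ ∂X; it is given by u(x) = g(x)/α(x) for x ∈ B and u_{X°∪A} = −(I − P̃)^{-1}( f̃ − P̃_{X°∪A,B}·(g/α)_B ). -/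

import Mathlib

open Matrix Finset

attribute [local instance] Classical.propDecidable

/-- The Laplacian `Δu = Pu − u` acting on complex functions. -/
noncomputable def lap {X : Type*} [Fintype X] (P : Matrix X X ℝ) (u : X → ℂ) (x : X) : ℂ :=
  (∑ y, (P x y : ℂ) * u y) - u x

/-- The part `A = {x ∈ ∂X : β(x) ≠ 0}` of the boundary. -/
noncomputable def Apart {X : Type*} (Bnd : Finset X) (β : X → ℂ) : Finset X :=
  Bnd.filter fun x => β x ≠ 0

/-- The part `B = {x ∈ ∂X : β(x) = 0}` of the boundary. -/
noncomputable def Bpart {X : Type*} (Bnd : Finset X) (β : X → ℂ) : Finset X :=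
  Bnd.filter fun x => β x = 0

/-- The modified transition matrix over `X° ∪ A` of the Robin problem. -/
noncomputable def PRobin {X : Type*} [Fintype X] [DecidableEq X] (P : Matrix X X ℝ)
    (Bnd : Finset X) (α β : X → ℂ) :
    Matrix ↥(Bndᶜ ∪ Apart Bnd β) ↥(Bndᶜ ∪ Apart Bnd β) ℂ :=
  Matrix.of fun x y =>
    (if x.1 ∈ Bnd then β x.1 / (α x.1 + β x.1) else 1) * (P x.1 y.1 : ℂ)

/-- The `(X°∪A) × B` block of the modified transition matrix of the Robin problem. -/
noncomputable def PRobinB {X : Type*} [Fintype X] [DecidableEq X] (P : Matrix X X ℝ)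
    (Bnd : Finset X) (α β : X → ℂ) :
    Matrix ↥(Bndᶜ ∪ Apart Bnd β) ↥(Bpart Bnd β) ℂ :=
  Matrix.of fun x z =>
    (if x.1 ∈ Bnd then β x.1 / (α x.1 + β x.1) else 1) * (P x.1 z.1 : ℂ)

set_option linter.unusedSectionVars false
set_option linter.unusedVariables false
set_option maxHeartbeats 1000000

section aux
variable {X : Type*} [Fintype X] [DecidableEq X]

lemma mem_SRobin {Bnd : Finset X} {β : X → ℂ} {x : X} :
    x ∈ Bndᶜ ∪ Apart Bnd β ↔ (x ∉ Bnd ∨ β x ≠ 0) := by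
  simp only [Finset.mem_union, Finset.mem_compl, Apart, Finset.mem_filter]
  tauto

lemma not_mem_SRobin {Bnd : Finset X} {β : X → ℂ} {x : X} :
    x ∉ Bndᶜ ∪ Apart Bnd β ↔ (x ∈ Bnd ∧ β x = 0) := by
  rw [mem_SRobin]; tauto

lemma mem_BpRobin {Bnd : Finset X} {β : X → ℂ} {x : X} :
    x ∈ Bpart Bnd β ↔ (x ∈ Bnd ∧ β x = 0) := by
  simp [Bpart, Finset.mem_filter]

lemma SRobin_compl {Bnd : Finset X} {β : X → ℂ} :
    (Bndᶜ ∪ Apart Bnd β)ᶜ = Bpart Bnd β := by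
  ext x
  rw [Finset.mem_compl, not_mem_SRobin, mem_BpRobin]

noncomputable def cRobin (Bnd : Finset X) (α β : X → ℂ) (x : X) : ℂ :=
  if x ∈ Bnd then β x / (α x + β x) else 1

lemma sum_abne_pos {Bnd : Finset X} {α β : X → ℂ} {x : X}
    (hineq : ∀ x ∈ Bnd, β x ≠ 0 → ‖β x‖ ≤ ‖α x + β x‖)
    (hx : x ∈ Bnd) (hβ : β x ≠ 0) : 0 < ‖α x + β x‖ :=
  lt_of_lt_of_le (by simpa using hβ) (hineq x hx hβ)

lemma cRobin_abs_le {Bnd : Finset X} {α β : X → ℂ} {x : X}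
    (hineq : ∀ x ∈ Bnd, β x ≠ 0 → ‖β x‖ ≤ ‖α x + β x‖)
    (hx : x ∈ Bndᶜ ∪ Apart Bnd β) : ‖cRobin Bnd α β x‖ ≤ 1 := by
  unfold cRobin
  by_cases h : x ∈ Bnd
  · rw [if_pos h]
    have hβ : β x ≠ 0 := by
      rcases mem_SRobin.mp hx with h' | h'
      · exact absurd h h'
      · exact h'
    rw [norm_div]
    exact div_le_one_of_le₀ (hineq x h hβ) (norm_nonneg _)
  · simp [if_neg h]

lemma robin_isUnit (P : Matrix X X ℝ)
    (hnonneg : ∀ x y, 0 ≤ P x y) (hrow : ∀ x, ∑ y, P x y = 1)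
    (hirr : ∀ x y, ∃ n, 1 ≤ n ∧ 0 < (P ^ n) x y)
    (Bnd : Finset X) (α β : X → ℂ)
    (hineq : ∀ x ∈ Bnd, β x ≠ 0 → ‖β x‖ ≤ ‖α x + β x‖)
    (hextra : (∃ x ∈ Bnd, β x = 0) ∨
      (∃ x ∈ Bnd, β x ≠ 0 ∧ ‖β x‖ < ‖α x + β x‖)) :
    IsUnit (1 - PRobin P Bnd α β) := by
  have hX : Nonempty X := by
    rcases hextra with ⟨x, _, _⟩ | ⟨x, _, _⟩ <;> exact ⟨x⟩
  rw [← Matrix.mulVec_injective_iff_isUnit]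
  have hker : ∀ v, (1 - PRobin P Bnd α β).mulVec v = 0 → v = 0 := by
    intro v hv
    set V : X → ℂ := fun x => if hx : x ∈ Bndᶜ ∪ Apart Bnd β then v ⟨x, hx⟩ else 0 with hVdef
    have hV0 : ∀ x, x ∉ Bndᶜ ∪ Apart Bnd β → V x = 0 := fun x hx => dif_neg hx
    have hVv : ∀ (x : ↥(Bndᶜ ∪ Apart Bnd β)), V x.1 = v x := fun x => dif_pos x.2
    rw [Matrix.sub_mulVec, Matrix.one_mulVec] at hv
    have hEq : ∀ x, x ∈ Bndᶜ ∪ Apart Bnd β → V x = cRobin Bnd α β x * ∑ y : X, (P x y : ℂ) * V y := by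
      intro x hx
      have h1 := congrFun hv ⟨x, hx⟩
      simp only [Pi.sub_apply, Pi.zero_apply, sub_eq_zero] at h1
      have h2 : (PRobin P Bnd α β).mulVec v ⟨x, hx⟩
          = cRobin Bnd α β x * ∑ y : ↥(Bndᶜ ∪ Apart Bnd β), (P x y.1 : ℂ) * V y.1 := by
        rw [Matrix.mulVec, dotProduct, Finset.mul_sum]
        refine Finset.sum_congr rfl fun y _ => ?_
        rw [hVv y]
        simp only [PRobin, Matrix.of_apply, cRobin]
        ring
      have h3 : ∑ y : ↥(Bndᶜ ∪ Apart Bnd β), (P x y.1 : ℂ) * V y.1 = ∑ y : X, (P x y : ℂ) * V y := by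
        rw [Finset.sum_coe_sort (Bndᶜ ∪ Apart Bnd β) (fun y => (P x y : ℂ) * V y)]
        rw [← Finset.sum_add_sum_compl (Bndᶜ ∪ Apart Bnd β) (fun y => (P x y : ℂ) * V y)]
        have : ∑ y ∈ (Bndᶜ ∪ Apart Bnd β)ᶜ, (P x y : ℂ) * V y = 0 :=
          Finset.sum_eq_zero fun y hy => by
            rw [hV0 y (Finset.mem_compl.mp hy), mul_zero]
        rw [this, add_zero]
      rw [hVv ⟨x, hx⟩] at *
      rw [h1, h2, h3]
    -- maximum principle
    obtain ⟨x₀, -, hmax'⟩ := Finset.exists_max_image Finset.univ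
      (fun x => ‖V x‖) Finset.univ_nonempty
    have hmax : ∀ x, ‖V x‖ ≤ ‖V x₀‖ :=
      fun x => hmax' x (Finset.mem_univ x)
    set M := ‖V x₀‖ with hM
    by_cases hMpos : 0 < M
    · exfalso
      have step : ∀ x, ‖V x‖ = M →
          x ∈ Bndᶜ ∪ Apart Bnd β ∧ ‖cRobin Bnd α β x‖ = 1 ∧
            ∀ y, 0 < P x y → ‖V y‖ = M := by
        intro x hTx
        have hxS : x ∈ Bndᶜ ∪ Apart Bnd β := by
          by_contra h
          rw [hV0 x h, norm_zero] at hTx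
          exact hMpos.ne hTx
        have hE := hEq x hxS
        set Sr := ∑ y, P x y * ‖V y‖ with hSr
        have hSrnn : 0 ≤ Sr :=
          Finset.sum_nonneg fun y _ => mul_nonneg (hnonneg x y) (norm_nonneg _)
        have h1 : M ≤ ‖cRobin Bnd α β x‖ * Sr := by
          rw [← hTx, hE, norm_mul]
          refine mul_le_mul_of_nonneg_left ?_ (norm_nonneg _)
          refine le_trans (norm_sum_le _ _) (le_of_eq ?_)
          refine Finset.sum_congr rfl fun y _ => ?_
          rw [norm_mul, Complex.norm_real, Real.norm_eq_abs, abs_of_nonneg (hnonneg x y)]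
        have h2 : Sr ≤ M := by
          calc Sr ≤ ∑ y, P x y * M :=
                Finset.sum_le_sum fun y _ => mul_le_mul_of_nonneg_left (hmax y) (hnonneg x y)
          _ = M := by rw [← Finset.sum_mul, hrow, one_mul]
        have hc1 : ‖cRobin Bnd α β x‖ ≤ 1 := cRobin_abs_le hineq hxS
        have hMleSr : M ≤ Sr :=
          le_trans h1 (mul_le_of_le_one_left hSrnn hc1)
        have hSrM : Sr = M := le_antisymm h2 hMleSr
        refine ⟨hxS, ?_, ?_⟩
        · rw [hSrM] at h1
          nlinarith [norm_nonneg (cRobin Bnd α β x)]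
        · intro y hPy
          have hzero : ∑ y, P x y * (M - ‖V y‖) = 0 := by
            simp only [mul_sub]
            rw [Finset.sum_sub_distrib, ← Finset.sum_mul, hrow, one_mul, ← hSr, hSrM, sub_self]
          have hterm := (Finset.sum_eq_zero_iff_of_nonneg
            (fun y _ => mul_nonneg (hnonneg x y) (sub_nonneg.mpr (hmax y)))).mp hzero
            y (Finset.mem_univ y)
          rcases mul_eq_zero.mp hterm with h | h
          · exact absurd h hPy.ne'
          · linarith [sub_eq_zero.mp h]
      have hpow : ∀ n x y, 0 ≤ (P ^ n) x y := by
        intro n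
        induction n with
        | zero => intro x y; by_cases h : x = y <;> simp [Matrix.one_apply, h]
        | succ n ih =>
          intro x y
          rw [pow_succ, Matrix.mul_apply]
          exact Finset.sum_nonneg fun w _ => mul_nonneg (ih x w) (hnonneg w y)
      have hclos : ∀ n, ∀ x y, ‖V x‖ = M → 0 < (P ^ n) x y →
          ‖V y‖ = M := by
        intro n
        induction n with
        | zero =>
          intro x y hx hp
          rw [pow_zero] at hp
          have hxy : x = y := by
            by_contra hne
            rw [Matrix.one_apply_ne hne] at hp
            exact lt_irrefl 0 hp
          rwa [← hxy]
        | succ n ih =>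
          intro x y hx hp
          rw [pow_succ, Matrix.mul_apply] at hp
          have hw : ∃ w, 0 < (P ^ n) x w ∧ 0 < P w y := by
            by_contra hcon
            push_neg at hcon
            have : ∑ w, (P ^ n) x w * P w y = 0 := by
              refine Finset.sum_eq_zero fun w _ => ?_
              rcases lt_or_eq_of_le (hpow n x w) with h | h
              · have := hcon w h
                have h0 : P w y = 0 := le_antisymm this (hnonneg w y)
                rw [h0, mul_zero]
              · rw [← h, zero_mul]
            rw [this] at hp
            exact lt_irrefl 0 hp
          obtain ⟨w, h1, h2⟩ := hw
          exact (step w (ih x w hx h1)).2.2 y h2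
      have hT : ∀ y, ‖V y‖ = M := by
        intro y
        obtain ⟨n, -, hp⟩ := hirr x₀ y
        exact hclos n x₀ y rfl hp
      rcases hextra with ⟨z, hz, hβz⟩ | ⟨a, ha, hβa, hlt⟩
      · have hzS := (step z (hT z)).1
        rcases mem_SRobin.mp hzS with h | h
        · exact h hz
        · exact h hβz
      · have hca := (step a (hT a)).2.1
        unfold cRobin at hca
        rw [if_pos ha, norm_div] at hca
        have habs := sum_abne_pos hineq ha hβa
        rw [div_eq_one_iff_eq habs.ne'] at hca
        linarith
    · push_neg at hMpos
      have hM0 : ∀ x, V x = 0 := fun x => by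
        have := hmax x
        have : ‖V x‖ = 0 := le_antisymm (le_trans this hMpos) (norm_nonneg _)
        exact norm_eq_zero.mp this
      funext x
      simp only [Pi.zero_apply]
      rw [← hVv x, hM0 x.1]
  intro a b hab
  have h0 : (1 - PRobin P Bnd α β).mulVec (a - b) = 0 := by
    rw [Matrix.mulVec_sub, hab, sub_self]
  exact sub_eq_zero.mp (hker _ h0)
lemma robin_key (P : Matrix X X ℝ) (Bnd : Finset X) (g α β : X → ℂ)
    (u : X → ℂ) (hcondB : ∀ x ∈ Bnd, β x = 0 → u x = g x / α x)
    (x : ↥(Bndᶜ ∪ Apart Bnd β)) :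
    (1 - PRobin P Bnd α β).mulVec (fun y => u y.1) x
      = (u x.1 - cRobin Bnd α β x.1 * ∑ y : X, (P x.1 y : ℂ) * u y)
        + ∑ z : ↥(Bpart Bnd β), PRobinB P Bnd α β x z * (g z.1 / α z.1) := by
  rw [Matrix.sub_mulVec, Matrix.one_mulVec, Pi.sub_apply]
  have h1 : (PRobin P Bnd α β).mulVec (fun y => u y.1) x
      = cRobin Bnd α β x.1 * ∑ y ∈ Bndᶜ ∪ Apart Bnd β, (P x.1 y : ℂ) * u y := by
    rw [Matrix.mulVec, dotProduct, ← Finset.sum_coe_sort (Bndᶜ ∪ Apart Bnd β)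
      (fun y => (P x.1 y : ℂ) * u y), Finset.mul_sum]
    refine Finset.sum_congr rfl fun y _ => ?_
    simp only [PRobin, Matrix.of_apply, cRobin]
    ring
  have h2 : ∑ y ∈ Bndᶜ ∪ Apart Bnd β, (P x.1 y : ℂ) * u y
      = ∑ y : X, (P x.1 y : ℂ) * u y - ∑ z ∈ Bpart Bnd β, (P x.1 z : ℂ) * u z := by
    rw [← Finset.sum_add_sum_compl (Bndᶜ ∪ Apart Bnd β) (fun y => (P x.1 y : ℂ) * u y),
      SRobin_compl]
    ring
  have h3 : cRobin Bnd α β x.1 * ∑ z ∈ Bpart Bnd β, (P x.1 z : ℂ) * u z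
      = ∑ z : ↥(Bpart Bnd β), PRobinB P Bnd α β x z * (g z.1 / α z.1) := by
    rw [← Finset.sum_coe_sort (Bpart Bnd β) (fun z => (P x.1 z : ℂ) * u z), Finset.mul_sum]
    refine Finset.sum_congr rfl fun z _ => ?_
    have hz := mem_BpRobin.mp z.2
    rw [hcondB z.1 hz.1 hz.2]
    simp only [PRobinB, Matrix.of_apply, cRobin]
    ring
  rw [h1, h2, mul_sub, h3]
  ring

lemma robin_equiv (P : Matrix X X ℝ) (Bnd : Finset X) (f g α β : X → ℂ)
    (hαB : ∀ x ∈ Bnd, β x = 0 → α x ≠ 0)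
    (hineq : ∀ x ∈ Bnd, β x ≠ 0 → ‖β x‖ ≤ ‖α x + β x‖)
    (u : X → ℂ) :
    ((∀ x, x ∉ Bnd → lap P u x = f x) ∧
        (∀ x ∈ Bnd, α x * u x + β x * (-lap P u x) = g x)) ↔
    ((∀ x ∈ Bnd, β x = 0 → u x = g x / α x) ∧
      (1 - PRobin P Bnd α β).mulVec (fun y : ↥(Bndᶜ ∪ Apart Bnd β) => u y.1) =
        fun x : ↥(Bndᶜ ∪ Apart Bnd β) =>
          (if x.1 ∈ Bnd then g x.1 / (α x.1 + β x.1) else -f x.1) +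
            ∑ z : ↥(Bpart Bnd β), PRobinB P Bnd α β x z * (g z.1 / α z.1)) := by
  constructor
  · rintro ⟨hint, hbnd⟩
    have hcondB : ∀ x ∈ Bnd, β x = 0 → u x = g x / α x := by
      intro x hx hβ
      have h := hbnd x hx
      rw [hβ, zero_mul, add_zero] at h
      rw [eq_div_iff (hαB x hx hβ)]
      linear_combination h
    refine ⟨hcondB, funext fun x => ?_⟩
    rw [robin_key P Bnd g α β u hcondB x]
    have hQ : u x.1 - cRobin Bnd α β x.1 * ∑ y : X, (P x.1 y : ℂ) * u y
        = (if x.1 ∈ Bnd then g x.1 / (α x.1 + β x.1) else -f x.1) := by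
      by_cases hx : x.1 ∈ Bnd
      · have hβ : β x.1 ≠ 0 := by
          rcases mem_SRobin.mp x.2 with h | h
          · exact absurd hx h
          · exact h
        have hαβ : α x.1 + β x.1 ≠ 0 := by
          intro h0
          have := sum_abne_pos hineq hx hβ
          rw [h0, norm_zero] at this
          exact lt_irrefl 0 this
        have h := hbnd x.1 hx
        unfold lap at h
        rw [if_pos hx]
        unfold cRobin
        rw [if_pos hx]
        field_simp
        linear_combination h
      · have h := hint x.1 hx
        unfold lap at h
        rw [if_neg hx]
        unfold cRobin
        rw [if_neg hx, one_mul]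
        linear_combination -h
    rw [hQ]
  · rintro ⟨hcondB, hmv⟩
    constructor
    · intro x hx
      have hxS : x ∈ Bndᶜ ∪ Apart Bnd β := mem_SRobin.mpr (Or.inl hx)
      have h := congrFun hmv ⟨x, hxS⟩
      rw [robin_key P Bnd g α β u hcondB ⟨x, hxS⟩] at h
      have h' := add_right_cancel h
      rw [if_neg hx] at h'
      unfold cRobin at h'
      rw [if_neg hx, one_mul] at h'
      unfold lap
      linear_combination -h'
    · intro x hx
      by_cases hβ : β x = 0
      · rw [hβ, zero_mul, add_zero, hcondB x hx hβ,
          mul_div_cancel₀ _ (hαB x hx hβ)]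
      · have hxS : x ∈ Bndᶜ ∪ Apart Bnd β := mem_SRobin.mpr (Or.inr hβ)
        have hαβ : α x + β x ≠ 0 := by
          intro h0
          have := sum_abne_pos hineq hx hβ
          rw [h0, norm_zero] at this
          exact lt_irrefl 0 this
        have h := congrFun hmv ⟨x, hxS⟩
        rw [robin_key P Bnd g α β u hcondB ⟨x, hxS⟩] at h
        have h' := add_right_cancel h
        rw [if_pos hx] at h'
        unfold cRobin at h'
        rw [if_pos hx] at h'
        unfold lap
        field_simp at h'
        linear_combination h'
end aux

/-- Solution of the Robin boundary problem `Δu = f` on `X°`,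
`α·u + β·∂ₙu = g` on `∂X`. -/
theorem robin_problem {X : Type*} [Fintype X] [DecidableEq X]
    (P : Matrix X X ℝ)
    (hcard : 1 < Fintype.card X)
    (hnonneg : ∀ x y, 0 ≤ P x y)
    (hrow : ∀ x, ∑ y, P x y = 1)
    (hirr : ∀ x y, ∃ n, 1 ≤ n ∧ 0 < (P ^ n) x y)
    (Bnd : Finset X) (hB : Bnd.Nonempty) (hB' : Bnd ≠ Finset.univ)
    (f g : X → ℂ) (α β : X → ℂ)
    (hαB : ∀ x ∈ Bnd, β x = 0 → α x ≠ 0)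
    (hineq : ∀ x ∈ Bnd, β x ≠ 0 → ‖β x‖ ≤ ‖α x + β x‖)
    (hextra : (∃ x ∈ Bnd, β x = 0) ∨
      (∃ x ∈ Bnd, β x ≠ 0 ∧ ‖β x‖ < ‖α x + β x‖)) :
    IsUnit (1 - PRobin P Bnd α β) ∧
    (∃! u : X → ℂ,
      (∀ x, x ∉ Bnd → lap P u x = f x) ∧
        (∀ x ∈ Bnd, α x * u x + β x * (-lap P u x) = g x)) ∧
    (∀ u : X → ℂ,
      ((∀ x, x ∉ Bnd → lap P u x = f x) ∧
        (∀ x ∈ Bnd, α x * u x + β x * (-lap P u x) = g x)) →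
      (∀ x ∈ Bnd, β x = 0 → u x = g x / α x) ∧
      (∀ x, ∀ hx : x ∈ Bndᶜ ∪ Apart Bnd β,
        u x = -∑ y : ↥(Bndᶜ ∪ Apart Bnd β),
          (1 - PRobin P Bnd α β)⁻¹ ⟨x, hx⟩ y *
            ((if y.1 ∈ Bnd then -g y.1 / (α y.1 + β y.1) else f y.1) -
              ∑ z : ↥(Bpart Bnd β), PRobinB P Bnd α β y z * (g z.1 / α z.1)))) := by
  have hUnit := robin_isUnit P hnonneg hrow hirr Bnd α β hineq hextra
  have hdet : IsUnit (1 - PRobin P Bnd α β).det :=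
    (Matrix.isUnit_iff_isUnit_det _).mp hUnit
  set R : ↥(Bndᶜ ∪ Apart Bnd β) → ℂ := fun x =>
    (if x.1 ∈ Bnd then g x.1 / (α x.1 + β x.1) else -f x.1) +
      ∑ z : ↥(Bpart Bnd β), PRobinB P Bnd α β x z * (g z.1 / α z.1) with hR
  -- from a solution, the interior/A part is determined
  have hSpart : ∀ u : X → ℂ,
      ((∀ x ∈ Bnd, β x = 0 → u x = g x / α x) ∧
        (1 - PRobin P Bnd α β).mulVec (fun y : ↥(Bndᶜ ∪ Apart Bnd β) => u y.1) = R) →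
      (fun y : ↥(Bndᶜ ∪ Apart Bnd β) => u y.1) = (1 - PRobin P Bnd α β)⁻¹.mulVec R := by
    intro u ⟨_, hmv⟩
    have h := congrArg (1 - PRobin P Bnd α β)⁻¹.mulVec hmv
    rwa [Matrix.mulVec_mulVec, Matrix.nonsing_inv_mul _ hdet, Matrix.one_mulVec] at h
  -- the candidate solution
  set u0 : X → ℂ := fun x =>
    if hx : x ∈ Bndᶜ ∪ Apart Bnd β then (1 - PRobin P Bnd α β)⁻¹.mulVec R ⟨x, hx⟩
    else g x / α x with hu0
  have hu0S : (fun y : ↥(Bndᶜ ∪ Apart Bnd β) => u0 y.1)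
      = (1 - PRobin P Bnd α β)⁻¹.mulVec R := by
    funext y
    exact dif_pos y.2
  have hu0cond : ∀ x ∈ Bnd, β x = 0 → u0 x = g x / α x := by
    intro x hx hβ
    exact dif_neg (not_mem_SRobin.mpr ⟨hx, hβ⟩)
  have hu0mv : (1 - PRobin P Bnd α β).mulVec (fun y : ↥(Bndᶜ ∪ Apart Bnd β) => u0 y.1) = R := by
    rw [hu0S, Matrix.mulVec_mulVec, Matrix.mul_nonsing_inv _ hdet, Matrix.one_mulVec]
  have hu0sol := (robin_equiv P Bnd f g α β hαB hineq u0).mpr ⟨hu0cond, hu0mv⟩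
  -- uniqueness
  have huniq : ∀ u : X → ℂ,
      ((∀ x, x ∉ Bnd → lap P u x = f x) ∧
        (∀ x ∈ Bnd, α x * u x + β x * (-lap P u x) = g x)) → u = u0 := by
    intro u hu
    obtain ⟨hcB, hmv⟩ := (robin_equiv P Bnd f g α β hαB hineq u).mp hu
    have hS := hSpart u ⟨hcB, hmv⟩
    funext x
    by_cases hx : x ∈ Bndᶜ ∪ Apart Bnd β
    · have h1 := congrFun hS ⟨x, hx⟩
      have h2 : u0 x = (1 - PRobin P Bnd α β)⁻¹.mulVec R ⟨x, hx⟩ := dif_pos hx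
      rw [h2]
      exact h1
    · obtain ⟨hxB, hβ⟩ := not_mem_SRobin.mp hx
      rw [hcB x hxB hβ]
      simp only [hu0]
      rw [dif_neg hx]
  refine ⟨hUnit, ⟨u0, hu0sol, huniq⟩, ?_⟩
  intro u hu
  obtain ⟨hcB, hmv⟩ := (robin_equiv P Bnd f g α β hαB hineq u).mp hu
  refine ⟨hcB, fun x hx => ?_⟩
  have hS := hSpart u ⟨hcB, hmv⟩
  have h1 := congrFun hS ⟨x, hx⟩
  rw [h1, Matrix.mulVec, dotProduct, ← Finset.sum_neg_distrib]
  refine Finset.sum_congr rfl fun y _ => ?_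
  have hstuff : ((if y.1 ∈ Bnd then -g y.1 / (α y.1 + β y.1) else f y.1) -
      ∑ z : ↥(Bpart Bnd β), PRobinB P Bnd α β y z * (g z.1 / α z.1)) = -R y := by
    by_cases hy : y.1 ∈ Bnd
    · simp only [hR, if_pos hy, neg_div]
      ring
    · simp only [hR, if_neg hy]
      ring
  rw [hstuff]
  ring
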